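/- Let V be a finite set and w : V × V → ℕ. For every subset Y ⊆ V and every v, u ∈ Y with v ≠ u, the maximum-weight Hamiltonian-path function satisfies L(Y, v, u) = max_{y ∈ Y ∖ {u}} ( L(Y ∖ {u}, v, y) + w(y, u) ). -/

import Mathlib

/-- The weight of a path `P = (v₁, …, v_ℓ)`, i.e. `∑_{j=2}^{ℓ} w(v_{j-1}, v_j)`. -/
def pathWeight {V : Type*} (w : V → V → ℕ) (P : List V) : ℕ :=
  (List.zipWith w P P.tail).sum

/-- Duplicate-free lists whose set of entries is exactly `Y`, starting at `v` and
ending at `u`. -/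
noncomputable def hamPaths {V : Type*} [DecidableEq V] (Y : Finset V) (v u : V) : Finset (List V) :=
  Y.toList.permutations.toFinset.filter
    (fun P => P.head? = some v ∧ P.getLast? = some u)

/-- `Lfun w Y v u` is the maximal weight of a duplicate-free path that visits exactly the
vertices of `Y`, starts at `v` and ends at `u`; it is `⊥` if no such path exists. -/
noncomputable def Lfun {V : Type*} [DecidableEq V] (w : V → V → ℕ) (Y : Finset V) (v u : V) : WithBot ℕ :=
  (hamPaths Y v u).sup (fun P => ((pathWeight w P : ℕ) : WithBot ℕ))

lemma mem_hamPaths_iff {V : Type*} [DecidableEq V] {Y : Finset V} {v u : V} {P : List V} :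
    P ∈ hamPaths Y v u ↔ P.Nodup ∧ P.toFinset = Y ∧ P.head? = some v ∧ P.getLast? = some u := by
  simp only [hamPaths, Finset.mem_filter, List.mem_toFinset, List.mem_permutations]
  constructor
  · rintro ⟨hp, h1, h2⟩
    exact ⟨hp.nodup_iff.mpr Y.nodup_toList, by rw [List.toFinset_eq_of_perm _ _ hp, Y.toList_toFinset], h1, h2⟩
  · rintro ⟨hnd, hfs, h1, h2⟩
    refine ⟨List.perm_of_nodup_nodup_toFinset_eq hnd Y.nodup_toList ?_, h1, h2⟩
    rw [hfs, Y.toList_toFinset]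

lemma pathWeight_concat {V : Type*} (w : V → V → ℕ) (Q : List V) (hQ : Q ≠ []) (u : V) :
    pathWeight w (Q ++ [u]) = pathWeight w Q + w (Q.getLast hQ) u := by
  induction Q with
  | nil => exact absurd rfl hQ
  | cons a l ih =>
    cases l with
    | nil => simp [pathWeight]
    | cons b m =>
      have := ih (by simp)
      simp only [List.cons_append, pathWeight, List.tail_cons, List.zipWith_cons_cons,
        List.sum_cons] at this ⊢
      rw [List.getLast_cons (by simp)]
      omega

theorem stmt8 {V : Type*} [DecidableEq V] (w : V → V → ℕ) (Y : Finset V) (v u : V)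
    (hv : v ∈ Y) (hu : u ∈ Y) (hvu : v ≠ u) :
    Lfun w Y v u =
      (Y \ {u}).sup (fun y => Lfun w (Y \ {u}) v y + ((w y u : ℕ) : WithBot ℕ)) := by
  apply le_antisymm
  · apply Finset.sup_le
    intro P hP
    rw [mem_hamPaths_iff] at hP
    obtain ⟨hnd, hfs, h1, h2⟩ := hP
    -- P is nonempty; write P = Q ++ [u]
    have hPne : P ≠ [] := by rintro rfl; simp at h1
    obtain ⟨Q, rfl⟩ : ∃ Q, P = Q ++ [u] := by
      refine ⟨P.dropLast, ?_⟩
      conv_lhs => rw [← List.dropLast_append_getLast hPne]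
      rw [List.getLast_eq_iff_getLast?_eq_some hPne |>.mpr h2]
    have hQne : Q ≠ [] := by
      rintro rfl
      simp at h1 h2
      exact hvu (h1.symm ▸ rfl)
    set y := Q.getLast hQne with hy
    have huQ : u ∉ Q := by
      have := (List.nodup_append'.mp hnd).2.2
      intro hmem
      exact this hmem (by simp)
    have hQfs : Q.toFinset = Y \ {u} := by
      ext x
      simp only [Finset.mem_sdiff, Finset.mem_singleton, ← hfs, List.toFinset_append,
        Finset.mem_union, List.mem_toFinset, List.toFinset_cons, List.toFinset_nil]
      constructor
      · intro hx
        exact ⟨Or.inl hx, fun h => huQ (h ▸ hx)⟩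
      · rintro ⟨hx | hx, hne⟩
        · exact hx
        · simp at hx; exact absurd hx hne
    have hQmem : Q ∈ hamPaths (Y \ {u}) v y := by
      rw [mem_hamPaths_iff]
      refine ⟨(List.nodup_append'.mp hnd).1, hQfs, ?_, ?_⟩
      · rwa [List.head?_append_of_ne_nil _ hQne] at h1
      · exact List.getLast?_eq_getLast hQne
    have hymem : y ∈ Y \ {u} := by rw [← hQfs]; exact List.mem_toFinset.mpr (List.getLast_mem hQne)
    calc ((pathWeight w (Q ++ [u]) : ℕ) : WithBot ℕ)
        = ((pathWeight w Q : ℕ) : WithBot ℕ) + ((w y u : ℕ) : WithBot ℕ) := by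
          rw [pathWeight_concat w Q hQne u]; push_cast; ring
      _ ≤ Lfun w (Y \ {u}) v y + ((w y u : ℕ) : WithBot ℕ) := by
          gcongr
          exact Finset.le_sup (f := fun P => ((pathWeight w P : ℕ) : WithBot ℕ)) hQmem
      _ ≤ _ := Finset.le_sup (f := fun y => Lfun w (Y \ {u}) v y + ((w y u : ℕ) : WithBot ℕ)) hymem
  · apply Finset.sup_le
    intro y hy
    rcases (hamPaths (Y \ {u}) v y).eq_empty_or_nonempty with he | hne
    · simp [Lfun, he]
    obtain ⟨Q, hQmem, hQsup⟩ := Finset.exists_mem_eq_sup _ hne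
        (fun P => ((pathWeight w P : ℕ) : WithBot ℕ))
    rw [Lfun, hQsup]
    rw [mem_hamPaths_iff] at hQmem
    obtain ⟨hnd, hfs, h1, h2⟩ := hQmem
    have hQne : Q ≠ [] := by rintro rfl; simp at h1
    have huQ : u ∉ Q := by
      intro h
      have : u ∈ Y \ {u} := hfs ▸ List.mem_toFinset.mpr h
      simp at this
    have hylast : Q.getLast hQne = y := (List.getLast_eq_iff_getLast?_eq_some hQne).mpr h2
    have hPmem : Q ++ [u] ∈ hamPaths Y v u := by
      rw [mem_hamPaths_iff]
      refine ⟨?_, ?_, ?_, List.getLast?_concat⟩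
      · rw [List.nodup_append']
        exact ⟨hnd, List.nodup_singleton u, fun a ha hb => by simp at hb; exact huQ (hb ▸ ha)⟩
      · rw [List.toFinset_append, hfs]
        simp only [List.toFinset_cons, List.toFinset_nil]
        have : insert u (∅ : Finset V) = {u} := by simp
        rw [this, Finset.sdiff_union_of_subset (Finset.singleton_subset_iff.mpr hu)]
      · rw [List.head?_append_of_ne_nil _ hQne]; exact h1
    calc ((pathWeight w Q : ℕ) : WithBot ℕ) + ((w y u : ℕ) : WithBot ℕ)
        = ((pathWeight w (Q ++ [u]) : ℕ) : WithBot ℕ) := by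
          rw [pathWeight_concat w Q hQne u, hylast]; push_cast; ring
      _ ≤ Lfun w Y v u := Finset.le_sup (f := fun P => ((pathWeight w P : ℕ) : WithBot ℕ)) hPmem
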